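/- Let (Λ, dx) be a complete σ-finite measure space with nonzero measure and 1 ≤ m ≤ N integers. Then there exists a constant C(N,m) > 0 such that for every u ∈ L^∞(Λ^m; d^m x), writing U = G_{N,m}u, one has ‖U‖_{∞,d^N x} ≤ ‖u‖_{∞,d^m x} ≤ C(N,m)‖U‖_{∞,d^N x}. In particular, G_{N,m} is a Banach space isomorphism from L^∞(Λ^m; d^m x) onto a closed subspace of L^∞(Λ^N; d^N x). -/

import Mathlib

open MeasureTheory
open scoped NNReal ENNReal

/-- The generalized `N`-mean of order `m` with kernel `u`. -/
noncomputable def genMean {Λ : Type*} (N m : ℕ) (u : (Fin m → Λ) → ℝ) :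
    (Fin N → Λ) → ℝ :=
  fun x => (N.choose m : ℝ)⁻¹ *
    ∑ s ∈ (Finset.powersetCard m (Finset.univ : Finset (Fin N))).attach,
      u (fun i => x (s.1.orderEmbOfFin (Finset.mem_powersetCard_univ.mp s.2) i))


open Finset

section Aux
variable {α : Type*} [DecidableEq α]

open Finset

variable {α : Type*} [DecidableEq α]

/-- counting supersets of `B` of cardinality `n` inside `s`. -/
lemma card_supersets (s B : Finset α) (hB : B ⊆ s) {n : ℕ} (hn : B.card ≤ n) :
    ((powersetCard n s).filter (fun A => B ⊆ A)).card
      = (s.card - B.card).choose (n - B.card) := by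
  rw [← Finset.card_sdiff_of_subset hB, ← Finset.card_powersetCard]
  apply Finset.card_bij' (fun A _ => A \ B) (fun C _ => C ∪ B)
  · intro A hA
    simp only [mem_filter, mem_powersetCard] at hA
    simp only [mem_powersetCard]
    exact ⟨sdiff_subset_sdiff hA.1.1 (le_refl _), by rw [card_sdiff_of_subset hA.2, hA.1.2]⟩
  · intro C hC
    simp only [mem_powersetCard] at hC
    have hdisj : Disjoint C B := by
      refine Finset.disjoint_left.mpr fun a haC haB => ?_
      exact (Finset.mem_sdiff.mp (hC.1 haC)).2 haB
    simp only [mem_filter, mem_powersetCard]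
    refine ⟨⟨union_subset (hC.1.trans (sdiff_subset)) hB, ?_⟩, subset_union_right⟩
    rw [card_union_of_disjoint hdisj, hC.2]
    omega
  · intro A hA
    simp only [mem_filter, mem_powersetCard] at hA
    exact sdiff_union_of_subset hA.2
  · intro C hC
    simp only [mem_powersetCard] at hC
    have hdisj : Disjoint C B := by
      refine Finset.disjoint_left.mpr fun a haC haB => ?_
      exact (Finset.mem_sdiff.mp (hC.1 haC)).2 haB
    rw [union_sdiff_distrib, sdiff_self]; simp [sdiff_eq_self_of_disjoint hdisj]

lemma pc_eq_filter {s A : Finset α} (hA : A ⊆ s) (r : ℕ) :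
    A.powersetCard r = (powersetCard r s).filter (fun T => T ⊆ A) := by
  ext T
  simp only [mem_powersetCard, mem_filter]
  exact ⟨fun ⟨h1, h2⟩ => ⟨⟨h1.trans hA, h2⟩, h1⟩, fun ⟨⟨_, h2⟩, h3⟩ => ⟨h3, h2⟩⟩

lemma sq_expand {β : Type*} [DecidableEq β] (𝒜 ℬ : Finset β) (p : β → β → Prop)
    [DecidableRel p] (t : β → ℝ) :
    ∑ A ∈ 𝒜, (∑ T ∈ ℬ.filter (p A), t T)^2
      = ∑ T ∈ ℬ, ∑ T' ∈ ℬ, t T * t T' *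
          ((𝒜.filter (fun A => p A T ∧ p A T')).card : ℝ) := by
  have : ∀ A ∈ 𝒜, (∑ T ∈ ℬ.filter (p A), t T)^2
      = ∑ T ∈ ℬ, ∑ T' ∈ ℬ, (if p A T ∧ p A T' then t T * t T' else 0) := by
    intro A _
    rw [sq, Finset.sum_filter, Finset.sum_mul_sum]
    refine Finset.sum_congr rfl fun T _ => Finset.sum_congr rfl fun T' _ => ?_
    by_cases h1 : p A T <;> by_cases h2 : p A T' <;> simp [h1, h2]
  rw [Finset.sum_congr rfl this, Finset.sum_comm]
  refine Finset.sum_congr rfl fun T _ => ?_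
  rw [Finset.sum_comm]
  refine Finset.sum_congr rfl fun T' _ => ?_
  rw [← Finset.sum_filter, Finset.sum_const, nsmul_eq_mul, mul_comm]

lemma up_inj {M k : ℕ} (hk : 1 ≤ k) (hkM : 2*k < M) (t : Finset (Fin M) → ℝ)
    (h : ∀ A ∈ powersetCard (k+1) (univ : Finset (Fin M)),
      ∑ T ∈ A.powersetCard k, t T = 0) :
    ∀ T ∈ powersetCard k (univ : Finset (Fin M)), t T = 0 := by
  classical
  have hMcard : (univ : Finset (Fin M)).card = M := by simp
  set P1 := powersetCard (k+1) (univ : Finset (Fin M)) with hP1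
  set Pk := powersetCard k (univ : Finset (Fin M)) with hPk
  set P0 := powersetCard (k-1) (univ : Finset (Fin M)) with hP0
  -- the "up" square vanishes
  have hup : ∑ A ∈ P1, (∑ T ∈ Pk.filter (fun T => T ⊆ A), t T)^2 = 0 := by
    refine Finset.sum_eq_zero fun A hA => ?_
    have hAu : A ⊆ univ := subset_univ A
    rw [hPk, ← pc_eq_filter hAu, h A hA]
    ring
  -- counting for pairs : difference of counts
  have keypair : ∀ T ∈ Pk, ∀ T' ∈ Pk,
      ((P1.filter (fun A => T ⊆ A ∧ T' ⊆ A)).card : ℝ)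
        - ((P0.filter (fun R => R ⊆ T ∧ R ⊆ T')).card : ℝ)
      = if T = T' then ((M : ℝ) - 2*k) else 0 := by
    intro T hT T' hT'
    have hTc : T.card = k := (mem_powersetCard_univ.mp hT)
    have hTc' : T'.card = k := (mem_powersetCard_univ.mp hT')
    have hupfil : P1.filter (fun A => T ⊆ A ∧ T' ⊆ A)
        = P1.filter (fun A => T ∪ T' ⊆ A) :=
      Finset.filter_congr fun A _ => (union_subset_iff).symm
    have hdnfil : P0.filter (fun R => R ⊆ T ∧ R ⊆ T')
        = (T ∩ T').powersetCard (k-1) := by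
      rw [hP0, pc_eq_filter (subset_univ (T ∩ T')) (k-1)]
      exact Finset.filter_congr fun R _ => Iff.symm subset_inter_iff
    rw [hupfil, hdnfil]
    by_cases hTT : T = T'
    · subst hTT
      rw [if_pos rfl, union_self, inter_self]
      rw [hP1, card_supersets univ T (subset_univ T) (by omega : T.card ≤ k + 1)]
      rw [Finset.card_powersetCard, hMcard, hTc]
      have h1 : (k+1) - k = 1 := by omega
      have h2 : k - (k-1) = 1 := by omega
      rw [h1, Nat.choose_one_right, ← Nat.choose_symm (by omega : k - 1 ≤ k), h2,
        Nat.choose_one_right]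
      have hkM' : k ≤ M := by omega
      rw [Nat.cast_sub hkM']
      ring
    · rw [if_neg hTT]
      have hlt : (T ∩ T').card < k := by
        rcases lt_or_eq_of_le ((card_le_card (inter_subset_left (s₂ := T'))).trans_eq hTc)
          with h | h
        · exact h
        · exfalso
          have h3 : T ∩ T' = T := eq_of_subset_of_card_le inter_subset_left (by omega)
          have h4 : T ⊆ T' := by rw [← h3]; exact inter_subset_right
          exact hTT (eq_of_subset_of_card_le h4 (by omega))
      have hcu : (T ∪ T').card + (T ∩ T').card = 2 * k := by
        rw [Finset.card_union_add_card_inter, hTc, hTc']; ring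
      rcases Nat.lt_or_ge (T ∩ T').card (k - 1) with hc | hc
      · -- counts are both zero
        have e1 : P1.filter (fun A => T ∪ T' ⊆ A) = ∅ := by
          refine Finset.filter_eq_empty_iff.mpr fun A hA hsub => ?_
          have : (T ∪ T').card ≤ A.card := card_le_card hsub
          have hAc : A.card = k + 1 := mem_powersetCard_univ.mp hA
          omega
        rw [e1, Finset.card_powersetCard, Nat.choose_eq_zero_of_lt hc]
        simp
      · have hc' : (T ∩ T').card = k - 1 := by omega
        have e1 : (T ∪ T').card = k + 1 := by omega
        rw [hP1, card_supersets univ (T ∪ T') (subset_univ _) (by omega), e1]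
        rw [Finset.card_powersetCard, hc']
        simp
  -- expand the squares
  have hup2 := sq_expand P1 Pk (fun A T => T ⊆ A) t
  have hdn2 := sq_expand P0 Pk (fun R T => R ⊆ T) t
  have hdnpos : (0:ℝ) ≤ ∑ R ∈ P0, (∑ T ∈ Pk.filter (fun T => R ⊆ T), t T)^2 :=
    Finset.sum_nonneg fun R _ => sq_nonneg _
  have hdiff : ((M : ℝ) - 2*k) * ∑ T ∈ Pk, (t T)^2
      = - ∑ R ∈ P0, (∑ T ∈ Pk.filter (fun T => R ⊆ T), t T)^2 := by
    have : ((M : ℝ) - 2*k) * ∑ T ∈ Pk, (t T)^2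
        = (∑ A ∈ P1, (∑ T ∈ Pk.filter (fun T => T ⊆ A), t T)^2)
          - ∑ R ∈ P0, (∑ T ∈ Pk.filter (fun T => R ⊆ T), t T)^2 := by
      rw [hup2, hdn2, ← Finset.sum_sub_distrib]
      rw [Finset.mul_sum]
      refine Finset.sum_congr rfl fun T hT => ?_
      rw [← Finset.sum_sub_distrib]
      have : ∑ T' ∈ Pk, (t T * t T' * ((P1.filter (fun A => T ⊆ A ∧ T' ⊆ A)).card : ℝ)
          - t T * t T' * ((P0.filter (fun R => R ⊆ T ∧ R ⊆ T')).card : ℝ))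
          = ∑ T' ∈ Pk, (if T = T' then t T * t T' * ((M : ℝ) - 2*k) else 0) := by
        refine Finset.sum_congr rfl fun T' hT' => ?_
        rw [← mul_sub, keypair T hT T' hT']
        by_cases hTT : T = T' <;> simp [hTT]
      rw [this, Finset.sum_ite_eq Pk T (fun T' => t T * t T' * ((M : ℝ) - 2*k)), if_pos hT]
      ring
    rw [this, hup]
    ring
  have hsum0 : ∑ T ∈ Pk, (t T)^2 = 0 := by
    have hpos : (0:ℝ) < (M : ℝ) - 2*k := by
      have : (2*k : ℝ) < (M : ℝ) := by exact_mod_cast hkM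
      linarith
    have hnn : (0:ℝ) ≤ ∑ T ∈ Pk, (t T)^2 := Finset.sum_nonneg fun T _ => sq_nonneg _
    nlinarith [hdiff, hdnpos]
  intro T hT
  have := (Finset.sum_eq_zero_iff_of_nonneg (fun T _ => sq_nonneg (t T))).mp hsum0 T hT
  exact pow_eq_zero_iff (by norm_num) |>.mp this

lemma swap_gen (s : Finset α) (𝒜 : Finset (Finset α)) (hA : ∀ A ∈ 𝒜, A ⊆ s) (r : ℕ)
    (f : Finset α → Finset α → ℝ) :
    ∑ A ∈ 𝒜, ∑ T ∈ A.powersetCard r, f A T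
      = ∑ T ∈ powersetCard r s, ∑ A ∈ 𝒜.filter (fun A => T ⊆ A), f A T := by
  have e1 : ∑ A ∈ 𝒜, ∑ T ∈ A.powersetCard r, f A T
      = ∑ A ∈ 𝒜, ∑ T ∈ powersetCard r s, if T ⊆ A then f A T else 0 := by
    refine Finset.sum_congr rfl fun A hA' => ?_
    rw [pc_eq_filter (hA A hA') r, Finset.sum_filter]
  rw [e1, Finset.sum_comm]
  exact Finset.sum_congr rfl fun T _ => (Finset.sum_filter _ _).symm

lemma comb_main {M N m : ℕ} (hm : 1 ≤ m) (hmN : m ≤ N) (hNM : 2*N ≤ M)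
    (v : Finset (Fin M) → ℝ)
    (h0 : ∀ A ∈ powersetCard N (univ : Finset (Fin M)),
      ∑ S ∈ A.powersetCard m, v S = 0) :
    ∀ S ∈ powersetCard m (univ : Finset (Fin M)), v S = 0 := by
  classical
  have key : ∀ j k, k + j = N → m ≤ k →
      ∀ A ∈ powersetCard k (univ : Finset (Fin M)), ∑ S ∈ A.powersetCard m, v S = 0 := by
    intro j
    induction j with
    | zero => intro k hk _; rw [Nat.add_zero] at hk; subst hk; exact h0
    | succ j ih =>
      intro k hk hmk
      have hQ : ∀ A ∈ powersetCard (k+1) (univ : Finset (Fin M)),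
          ∑ S ∈ A.powersetCard m, v S = 0 := ih (k+1) (by omega) (by omega)
      -- apply single-step injectivity to t
      refine up_inj (by omega) (by omega) (fun T => ∑ S ∈ T.powersetCard m, v S) ?_
      intro A hA
      have hAc : A.card = k + 1 := mem_powersetCard_univ.mp hA
      rw [swap_gen A (A.powersetCard k)
        (fun T hT => (mem_powersetCard.mp hT).1) m (fun _ S => v S)]
      have step : ∀ S ∈ A.powersetCard m,
          ∑ T ∈ (A.powersetCard k).filter (fun T => S ⊆ T), v S
            = (((k+1) - m).choose (k - m) : ℝ) * v S := by
        intro S hS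
        rcases Finset.mem_powersetCard.mp hS with ⟨hSA, hSc⟩
        rw [Finset.sum_const, nsmul_eq_mul, card_supersets A S hSA (by omega), hAc, hSc]
      rw [Finset.sum_congr rfl step, ← Finset.mul_sum, hQ A hA, mul_zero]
  intro S hS
  have hSc : S.card = m := mem_powersetCard_univ.mp hS
  have := key (N - m) m (by omega) le_rfl S hS
  rwa [← hSc, Finset.powersetCard_self, Finset.sum_singleton] at this

end Aux


lemma pi_comp_null_iff {Λ : Type*} [MeasurableSpace Λ] (μ : Measure Λ) [SigmaFinite μ]
    (hμ : μ ≠ 0) {k M : ℕ} (ι : Fin k → Fin M) (hι : Function.Injective ι)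
    {B : Set (Fin k → Λ)} (hB : MeasurableSet B) :
    (Measure.pi fun _ : Fin M => μ) {w | (fun j => w (ι j)) ∈ B} = 0 ↔
      (Measure.pi fun _ : Fin k => μ) B = 0 := by
  classical
  set p : Fin M → Prop := fun i => i ∈ Set.range ι with hp
  letI d : DecidablePred p := Classical.decPred p
  letI F : Fintype {i // p i} := Subtype.fintype p
  let e : Fin k ≃ {i // p i} := Equiv.ofInjective ι hι
  let g : ({i // p i} → Λ) → (Fin k → Λ) := fun h j => h (e j)
  have hg : Measurable g := measurable_pi_iff.mpr fun j => measurable_pi_apply (e j)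
  have hgeq : g = ⇑(MeasurableEquiv.piCongrLeft (fun _ : {i // p i} => Λ) e).symm := by
    funext h j
    simp [g, MeasurableEquiv.piCongrLeft, Equiv.piCongrLeft_symm_apply]
  have h2 := (measurePreserving_piCongrLeft (fun _ : {i // p i} => μ) e).symm
    (MeasurableEquiv.piCongrLeft (fun _ : {i // p i} => Λ) e)
  have hmeasg : (Measure.pi fun _ : {i // p i} => μ) (g ⁻¹' B)
      = (Measure.pi fun _ : Fin k => μ) B := by
    rw [hgeq]
    exact h2.measure_preimage hB.nullMeasurableSet
  have h1 := measurePreserving_piEquivPiSubtypeProd (fun _ : Fin M => μ) p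
  have hset : {w : Fin M → Λ | (fun j => w (ι j)) ∈ B}
      = (MeasurableEquiv.piEquivPiSubtypeProd (fun _ : Fin M => Λ) p) ⁻¹'
          ((g ⁻¹' B) ×ˢ (Set.univ : Set ({i // ¬ p i} → Λ))) := by
    ext w
    simp only [Set.mem_preimage, Set.mem_setOf_eq, Set.mem_prod, Set.mem_univ, and_true,
      MeasurableEquiv.piEquivPiSubtypeProd, MeasurableEquiv.coe_mk,
      Equiv.piEquivPiSubtypeProd_apply]
    have : (fun j => w (ι j)) = g (fun i : {i // p i} => w i) := by
      funext j
      rfl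
    rw [this]
  rw [hset, h1.measure_preimage (((hg hB).prod
    MeasurableSet.univ)).nullMeasurableSet, Measure.prod_prod]
  have hne : (Measure.pi fun _ : {i // ¬ p i} => μ) Set.univ ≠ 0 := by
    rw [Measure.pi_univ]
    refine Finset.prod_ne_zero_iff.mpr fun i _ => ?_
    simpa [Measure.measure_univ_eq_zero] using hμ
  constructor
  · intro h
    rcases mul_eq_zero.mp h with h' | h'
    · exact hmeasg.symm.trans h'
    · exact absurd h' hne
  · intro h
    exact mul_eq_zero.mpr (Or.inl (hmeasg.trans h))

lemma genMean_comp {Λ : Type*} {N m M : ℕ} (u : (Fin m → Λ) → ℝ)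
    (w : Fin M → Λ) (A : Finset (Fin M)) (hA : A.card = N) :
    genMean N m u (fun j => w (A.orderEmbOfFin hA j))
      = (N.choose m : ℝ)⁻¹ * ∑ S ∈ A.powersetCard m,
          (if h : S.card = m then u (fun i => w (S.orderEmbOfFin h i)) else 0) := by
  have hinj : Function.Injective (A.orderEmbOfFin hA) :=
    (A.orderEmbOfFin hA).injective
  unfold genMean
  congr 1
  refine Finset.sum_bij (fun s _ => s.1.image (A.orderEmbOfFin hA)) ?_ ?_ ?_ ?_
  · intro s _
    have hs : s.1.card = m := Finset.mem_powersetCard_univ.mp s.2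
    refine Finset.mem_powersetCard.mpr ⟨?_, ?_⟩
    · exact Finset.image_subset_iff.mpr fun x _ => Finset.orderEmbOfFin_mem A hA x
    · rw [Finset.card_image_of_injective _ hinj, hs]
  · intro s _ s' _ hss
    have h1 : s.1 ⊆ s'.1 := (Finset.image_subset_image_iff hinj).mp hss.le
    have h2 : s'.1 ⊆ s.1 := (Finset.image_subset_image_iff hinj).mp hss.ge
    exact Subtype.ext (Finset.Subset.antisymm h1 h2)
  · intro T hT
    rcases Finset.mem_powersetCard.mp hT with ⟨hTA, hTc⟩
    have himg : (Finset.univ : Finset (Fin N)).image (A.orderEmbOfFin hA) = A := by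
      apply Finset.eq_of_subset_of_card_le
      · exact Finset.image_subset_iff.mpr fun x _ => Finset.orderEmbOfFin_mem A hA x
      · rw [Finset.card_image_of_injective _ hinj, hA, Finset.card_univ, Fintype.card_fin]
    have hTsub : T ⊆ (Finset.univ : Finset (Fin N)).image (A.orderEmbOfFin hA) := by
      rw [himg]; exact hTA
    rcases Finset.subset_image_iff.mp hTsub with ⟨s', _, hs'⟩
    have hs'c : s'.card = m := by
      have := Finset.card_image_of_injective s' hinj
      rw [hs'] at this
      omega
    exact ⟨⟨s', Finset.mem_powersetCard_univ.mpr hs'c⟩, Finset.mem_attach _ _, hs'⟩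
  · intro s _
    have hs : s.1.card = m := Finset.mem_powersetCard_univ.mp s.2
    have h' : (s.1.image (A.orderEmbOfFin hA)).card = m := by
      rw [Finset.card_image_of_injective _ hinj, hs]
    rw [dif_pos h']
    have hmono : StrictMono (fun i => A.orderEmbOfFin hA (s.1.orderEmbOfFin hs i)) :=
      (A.orderEmbOfFin hA).strictMono.comp (s.1.orderEmbOfFin hs).strictMono
    have hmem : ∀ x, A.orderEmbOfFin hA (s.1.orderEmbOfFin hs x) ∈ s.1.image (A.orderEmbOfFin hA) :=
      fun x => Finset.mem_image_of_mem _ (Finset.orderEmbOfFin_mem _ hs x)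
    have heq := Finset.orderEmbOfFin_unique h' hmem hmono
    congr 1
    funext i
    exact congrArg w (congrFun heq i)

lemma castLE_finset {m M : ℕ} (h : m ≤ M) :
    ∃ (T : Finset (Fin M)) (hT : T.card = m),
      (fun i => T.orderEmbOfFin hT i) = Fin.castLE h := by
  refine ⟨Finset.map (Fin.castLEOrderEmb h).toEmbedding Finset.univ, by simp, ?_⟩
  refine (Finset.orderEmbOfFin_unique _ (fun x => ?_) (Fin.strictMono_castLE h)).symm
  exact Finset.mem_map.mpr ⟨x, Finset.mem_univ x, rfl⟩

noncomputable def PhiFun (M N m : ℕ)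
    (v : {S // S ∈ powersetCard m (univ : Finset (Fin M))} → ℝ) :
    {A // A ∈ powersetCard N (univ : Finset (Fin M))} → ℝ :=
  fun A => ∑ S ∈ A.1.powersetCard m,
    if h : S ∈ powersetCard m (univ : Finset (Fin M)) then v ⟨S, h⟩ else 0

noncomputable def PhiMap (M N m : ℕ) :
    ({S // S ∈ powersetCard m (univ : Finset (Fin M))} → ℝ) →ₗ[ℝ]
    ({A // A ∈ powersetCard N (univ : Finset (Fin M))} → ℝ) where
  toFun := PhiFun M N m
  map_add' v v' := by
    funext A
    unfold PhiFun
    simp only [Pi.add_apply, ← Finset.sum_add_distrib]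
    refine Finset.sum_congr rfl fun S _ => ?_
    by_cases h : S ∈ powersetCard m (univ : Finset (Fin M)) <;> simp [h]
  map_smul' a v := by
    funext A
    unfold PhiFun
    simp only [RingHom.id_apply, Pi.smul_apply, smul_eq_mul, Finset.mul_sum]
    refine Finset.sum_congr rfl fun S _ => ?_
    by_cases h : S ∈ powersetCard m (univ : Finset (Fin M)) <;> simp [h]

lemma main_bound {M N m : ℕ} (hm : 1 ≤ m) (hmN : m ≤ N) (hNM : 2*N ≤ M) :
    ∃ c : ℝ, 0 ≤ c ∧ ∀ (v : Finset (Fin M) → ℝ) (b : ℝ), 0 ≤ b →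
      (∀ A ∈ powersetCard N (univ : Finset (Fin M)),
        |∑ S ∈ A.powersetCard m, v S| ≤ b) →
      ∀ T ∈ powersetCard m (univ : Finset (Fin M)), |v T| ≤ c * b := by
  classical
  set Φ := PhiMap M N m with hΦdef
  have hinj : Function.Injective Φ := by
    have hz : ∀ w, Φ w = 0 → w = 0 := by
      intro w hw
      have h0 : ∀ A ∈ powersetCard N (univ : Finset (Fin M)), ∑ S ∈ A.powersetCard m,
          (fun S => if h : S ∈ powersetCard m (univ : Finset (Fin M)) then w ⟨S, h⟩ else 0) S
            = 0 := by
        intro A hA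
        have : Φ w ⟨A, hA⟩ = 0 := by rw [hw]; rfl
        exact this
      have hcm := comb_main hm hmN hNM _ h0
      funext S
      have h1 := hcm S.1 S.2
      rw [dif_pos S.2] at h1
      simpa using h1
    intro v v' hvv
    have h2 : Φ (v - v') = 0 := by rw [map_sub, hvv, sub_self]
    exact sub_eq_zero.mp (hz _ h2)
  let e := LinearEquiv.ofInjective Φ hinj
  let F := LinearMap.toContinuousLinearMap (e.symm.toLinearMap)
  refine ⟨‖F‖, F.opNorm_nonneg, ?_⟩
  intro v b hb hbd T hT
  set v' : {S // S ∈ powersetCard m (univ : Finset (Fin M))} → ℝ := fun S => v S.1 with hv'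
  have hΦ : ∀ A : {A // A ∈ powersetCard N (univ : Finset (Fin M))},
      (Φ v') A = ∑ S ∈ A.1.powersetCard m, v S := by
    intro A
    show (∑ S ∈ A.1.powersetCard m,
      if h : S ∈ powersetCard m (univ : Finset (Fin M)) then v' ⟨S, h⟩ else 0) = _
    refine Finset.sum_congr rfl fun S hS => ?_
    have hSm : S ∈ powersetCard m (univ : Finset (Fin M)) :=
      Finset.mem_powersetCard_univ.mpr (Finset.mem_powersetCard.mp hS).2
    rw [dif_pos hSm]
  have hnorm : ‖Φ v'‖ ≤ b := by
    refine pi_norm_le_iff_of_nonneg hb |>.mpr fun A => ?_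
    rw [hΦ A, Real.norm_eq_abs]
    exact hbd A.1 A.2
  have hv : ‖v'‖ ≤ ‖F‖ * b := by
    have h1 : v' = F ⟨Φ v', LinearMap.mem_range_self Φ v'⟩ := by
      show v' = e.symm ⟨Φ v', LinearMap.mem_range_self Φ v'⟩
      have h2 : (⟨Φ v', LinearMap.mem_range_self Φ v'⟩ : LinearMap.range Φ) = e v' :=
        Subtype.ext rfl
      rw [h2, LinearEquiv.symm_apply_apply]
    rw [h1]
    calc ‖F ⟨Φ v', LinearMap.mem_range_self Φ v'⟩‖
        ≤ ‖F‖ * ‖(⟨Φ v', LinearMap.mem_range_self Φ v'⟩ : LinearMap.range Φ)‖ :=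
          F.le_opNorm _
      _ ≤ ‖F‖ * b := mul_le_mul_of_nonneg_left hnorm F.opNorm_nonneg
  calc |v T| = ‖v' ⟨T, hT⟩‖ := by rw [Real.norm_eq_abs]
    _ ≤ ‖v'‖ := norm_le_pi_norm v' ⟨T, hT⟩
    _ ≤ ‖F‖ * b := hv

/-- **Theorem 2(ii).** There is a constant `C(N,m) > 0` such that for every
`u ∈ L^∞(Λ^m; d^m x)`, with `U = G_{N,m} u`, one has
`‖U‖_∞ ≤ ‖u‖_∞ ≤ C(N,m) ‖U‖_∞`; in particular `G_{N,m}` is an isomorphism of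
`L^∞(Λ^m)` onto a closed subspace of `L^∞(Λ^N)`. -/
theorem genMean_memLp_top_iff_norm_est
    {Λ : Type*} [MeasurableSpace Λ] (μ : Measure Λ) [SigmaFinite μ] (hμ : μ ≠ 0)
    (N m : ℕ) (hm : 1 ≤ m) (hmN : m ≤ N) :
    ∃ C : ℝ≥0, 0 < C ∧ ∀ u : (Fin m → Λ) → ℝ, Measurable u →
      MemLp u ⊤ (Measure.pi fun _ : Fin m => μ) →
        MemLp (genMean N m u) ⊤ (Measure.pi fun _ : Fin N => μ) ∧
        eLpNorm (genMean N m u) ⊤ (Measure.pi fun _ : Fin N => μ) ≤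
          eLpNorm u ⊤ (Measure.pi fun _ : Fin m => μ) ∧
        eLpNorm u ⊤ (Measure.pi fun _ : Fin m => μ) ≤
          C * eLpNorm (genMean N m u) ⊤ (Measure.pi fun _ : Fin N => μ) := by
  classical
  obtain ⟨c, hc0, hcbd⟩ := main_bound (M := 2*N) hm hmN le_rfl
  have hchoose_pos : 0 < (N.choose m : ℝ) := by
    exact_mod_cast Nat.choose_pos hmN
  refine ⟨(c * (N.choose m : ℝ)).toNNReal + 1,
    add_pos_of_nonneg_of_pos zero_le zero_lt_one, fun u hu humem => ?_⟩
  set πm := (Measure.pi fun _ : Fin m => μ) with hπm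
  set πN := (Measure.pi fun _ : Fin N => μ) with hπN
  have hUmeas : Measurable (genMean N m u) := by
    unfold genMean
    refine Measurable.const_mul ?_ _
    refine Finset.measurable_sum _ fun s _ => ?_
    exact hu.comp (measurable_pi_iff.mpr fun i => measurable_pi_apply _)
  -- the L^∞ norm of u is finite
  have hufin : eLpNormEssSup u πm < ⊤ := by
    have := humem.2
    rwa [eLpNorm_exponent_top] at this
  set r := (eLpNormEssSup u πm).toReal with hr
  have hr0 : 0 ≤ r := ENNReal.toReal_nonneg
  have huae : ∀ᵐ x ∂πm, ‖u x‖ ≤ r := by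
    filter_upwards [enorm_ae_le_eLpNormEssSup u πm] with x hx
    calc ‖u x‖ = ((‖u x‖₊ : ℝ≥0∞)).toReal := by simp
      _ ≤ r := ENNReal.toReal_mono hufin.ne hx
  -- easy direction
  have h2 : eLpNorm (genMean N m u) ⊤ πN ≤ eLpNorm u ⊤ πm := by
    rw [eLpNorm_exponent_top, eLpNorm_exponent_top]
    set B : Set (Fin m → Λ) := {x | r < ‖u x‖} with hB
    have hBmeas : MeasurableSet B := measurableSet_lt measurable_const hu.norm
    have hBnull : πm B = 0 := by
      have h0 := ae_iff.mp huae
      have : {x | ¬ ‖u x‖ ≤ r} = B := by ext x; simp [hB, not_le]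
      rwa [this] at h0
    have hgood : ∀ᵐ y ∂πN, ∀ s : {x // x ∈ powersetCard m (univ : Finset (Fin N))},
        ‖u (fun j => y (s.1.orderEmbOfFin (Finset.mem_powersetCard_univ.mp s.2) j))‖ ≤ r := by
      rw [ae_all_iff]
      intro s
      have hinj : Function.Injective
          (s.1.orderEmbOfFin (Finset.mem_powersetCard_univ.mp s.2)) :=
        (s.1.orderEmbOfFin _).injective
      have h3 := (pi_comp_null_iff μ hμ _ hinj hBmeas).mpr hBnull
      rw [← hπN] at h3
      have hae := measure_eq_zero_iff_ae_notMem.mp h3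
      filter_upwards [hae] with y hy
      simp only [Set.mem_setOf_eq, hB, not_lt] at hy
      exact hy
    have hUbd : ∀ᵐ y ∂πN, ‖genMean N m u y‖ ≤ r := by
      filter_upwards [hgood] with y hy
      unfold genMean
      rw [Real.norm_eq_abs, abs_mul, abs_inv, abs_of_nonneg hchoose_pos.le]
      have hsum : |∑ s ∈ (Finset.powersetCard m (Finset.univ : Finset (Fin N))).attach,
          u (fun i => y (s.1.orderEmbOfFin (Finset.mem_powersetCard_univ.mp s.2) i))|
          ≤ (N.choose m : ℝ) * r := by
        refine (Finset.abs_sum_le_sum_abs _ _).trans ?_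
        have := Finset.sum_le_card_nsmul
          ((Finset.powersetCard m (Finset.univ : Finset (Fin N))).attach)
          (fun s => |u (fun i => y (s.1.orderEmbOfFin (Finset.mem_powersetCard_univ.mp s.2) i))|)
          r (fun s _ => by simpa [← Real.norm_eq_abs] using hy s)
        rw [Finset.card_attach, Finset.card_powersetCard, Finset.card_univ,
          Fintype.card_fin, nsmul_eq_mul] at this
        exact this
      calc (N.choose m : ℝ)⁻¹ * |∑ s ∈ (Finset.powersetCard m (Finset.univ : Finset (Fin N))).attach,
          u (fun i => y (s.1.orderEmbOfFin (Finset.mem_powersetCard_univ.mp s.2) i))|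
          ≤ (N.choose m : ℝ)⁻¹ * ((N.choose m : ℝ) * r) := by
            exact mul_le_mul_of_nonneg_left hsum (inv_nonneg.mpr hchoose_pos.le)
        _ = r := by field_simp
    calc eLpNormEssSup (genMean N m u) πN ≤ ENNReal.ofReal r :=
          eLpNormEssSup_le_of_ae_bound hUbd
      _ ≤ eLpNormEssSup u πm := ENNReal.ofReal_toReal_le
  have h1 : MemLp (genMean N m u) ⊤ πN :=
    ⟨hUmeas.aestronglyMeasurable, lt_of_le_of_lt h2 humem.2⟩
  refine ⟨h1, h2, ?_⟩
  -- hard direction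
  set a := eLpNormEssSup (genMean N m u) πN with ha
  have hafin : a < ⊤ := by
    have := lt_of_le_of_lt h2 humem.2
    rwa [eLpNorm_exponent_top] at this
  set b := a.toReal with hb
  have hb0 : 0 ≤ b := ENNReal.toReal_nonneg
  have hUae : ∀ᵐ y ∂πN, ‖genMean N m u y‖ ≤ b := by
    filter_upwards [enorm_ae_le_eLpNormEssSup (genMean N m u) πN] with y hy
    calc ‖genMean N m u y‖ = ((‖genMean N m u y‖₊ : ℝ≥0∞)).toReal := by simp
      _ ≤ b := ENNReal.toReal_mono hafin.ne hy
  set BU : Set (Fin N → Λ) := {y | b < ‖genMean N m u y‖} with hBU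
  have hBUmeas : MeasurableSet BU := measurableSet_lt measurable_const hUmeas.norm
  have hBUnull : πN BU = 0 := by
    have h0 := ae_iff.mp hUae
    have : {y | ¬ ‖genMean N m u y‖ ≤ b} = BU := by ext y; simp [hBU, not_le]
    rwa [this] at h0
  have hmM : m ≤ 2*N := by omega
  obtain ⟨T₀, hT₀c, hT₀emb⟩ := castLE_finset hmM
  have hgood : ∀ᵐ w ∂(Measure.pi fun _ : Fin (2*N) => μ),
      ∀ A : {A // A ∈ powersetCard N (univ : Finset (Fin (2*N)))},
        ‖genMean N m u (fun j =>
          w (A.1.orderEmbOfFin (Finset.mem_powersetCard_univ.mp A.2) j))‖ ≤ b := by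
    rw [ae_all_iff]
    intro A
    have hinj : Function.Injective
        (A.1.orderEmbOfFin (Finset.mem_powersetCard_univ.mp A.2)) :=
      (A.1.orderEmbOfFin _).injective
    have hnull := (pi_comp_null_iff μ hμ _ hinj hBUmeas).mpr (by rwa [hπN] at hBUnull)
    have hae := measure_eq_zero_iff_ae_notMem.mp hnull
    filter_upwards [hae] with w hw
    simp only [Set.mem_setOf_eq, hBU, not_lt] at hw
    exact hw
  set K := c * ((N.choose m : ℝ) * b) with hK
  have hptwise : ∀ w : Fin (2*N) → Λ,
      (∀ A : {A // A ∈ powersetCard N (univ : Finset (Fin (2*N)))},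
        ‖genMean N m u (fun j =>
          w (A.1.orderEmbOfFin (Finset.mem_powersetCard_univ.mp A.2) j))‖ ≤ b) →
      ‖u (fun j => w (Fin.castLE hmM j))‖ ≤ K := by
    intro w hw
    set v : Finset (Fin (2*N)) → ℝ := fun S =>
      if h : S.card = m then u (fun i => w (S.orderEmbOfFin h i)) else 0 with hv
    have hA : ∀ A ∈ powersetCard N (univ : Finset (Fin (2*N))),
        |∑ S ∈ A.powersetCard m, v S| ≤ (N.choose m : ℝ) * b := by
      intro A hAmem
      have hAc : A.card = N := Finset.mem_powersetCard_univ.mp hAmem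
      have hcomp := genMean_comp u w A hAc
      have hsum : ∑ S ∈ A.powersetCard m, v S
          = (N.choose m : ℝ) * genMean N m u (fun j => w (A.orderEmbOfFin hAc j)) := by
        rw [hcomp, ← mul_assoc, mul_inv_cancel₀ hchoose_pos.ne', one_mul]
      rw [hsum, abs_mul, abs_of_nonneg hchoose_pos.le]
      refine mul_le_mul_of_nonneg_left ?_ hchoose_pos.le
      rw [← Real.norm_eq_abs]
      exact hw ⟨A, hAmem⟩
    have hT₀mem : T₀ ∈ powersetCard m (univ : Finset (Fin (2*N))) :=
      Finset.mem_powersetCard_univ.mpr hT₀c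
    have := hcbd v ((N.choose m : ℝ) * b) (by positivity) hA T₀ hT₀mem
    have hvT : v T₀ = u (fun j => w (Fin.castLE hmM j)) := by
      rw [hv]
      simp only
      rw [dif_pos hT₀c]
      congr 1
      funext i
      rw [congrFun hT₀emb i]
    rw [hvT] at this
    rwa [Real.norm_eq_abs]
  set E : Set (Fin m → Λ) := {x | K < ‖u x‖} with hE
  have hEmeas : MeasurableSet E := measurableSet_lt measurable_const hu.norm
  have hEnull : πm E = 0 := by
    rw [hπm]
    rw [← pi_comp_null_iff μ hμ (Fin.castLE hmM) (Fin.castLE_injective hmM) hEmeas]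
    refine measure_mono_null ?_ (ae_iff.mp hgood)
    intro w hwmem
    simp only [Set.mem_setOf_eq] at hwmem ⊢
    intro hcontra
    have := hptwise w hcontra
    rw [hE] at hwmem
    simp only [Set.mem_setOf_eq] at hwmem
    exact absurd this (not_le.mpr hwmem)
  have huK : ∀ᵐ x ∂πm, ‖u x‖ ≤ K := by
    have : {x | ¬ ‖u x‖ ≤ K} = E := by ext x; simp [hE, not_le]
    rw [ae_iff, this]
    exact hEnull
  rw [eLpNorm_exponent_top, eLpNorm_exponent_top, ← ha]
  calc eLpNormEssSup u πm ≤ ENNReal.ofReal K := eLpNormEssSup_le_of_ae_bound huK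
    _ ≤ (((c * (N.choose m : ℝ)).toNNReal : ℝ≥0∞) + 1) * a := by
        rw [hK, ← mul_assoc, ENNReal.ofReal_mul (by positivity)]
        calc ENNReal.ofReal (c * (N.choose m : ℝ)) * ENNReal.ofReal b
            ≤ ENNReal.ofReal (c * (N.choose m : ℝ)) * a := by
              refine mul_le_mul_right ?_ _
              rw [hb]
              exact ENNReal.ofReal_toReal_le
          _ ≤ (((c * (N.choose m : ℝ)).toNNReal : ℝ≥0∞) + 1) * a := by
              refine mul_le_mul_left ?_ _
              rw [ENNReal.ofReal]
              exact le_add_of_nonneg_right zero_le
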